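/- Let P ⊂ ℝ³ be compact and S ⊂ ℝ³ compact with dist(S,P) ≥ δ > 0, μ a finite measure on S, and j ∈ L²(S, ℝ³; μ). Then for each k ∈ ℕ, the function y ↦ ∫_S K(x,y) × j(x) dμ(x) is C^k on the interior of P, and the map j ↦ BS(j) is a bounded linear operator from L²(S,ℝ³;μ) to L²(P,ℝ³); moreover this operator is compact. -/

import Mathlib

set_option maxHeartbeats 1000000
set_option synthInstance.maxHeartbeats 400000
open MeasureTheory Metric Set Filter Function
open scoped ENNReal NNReal Convolution

notation "E3" => EuclideanSpace ℝ (Fin 3)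
/-- The cross product on ℝ³ (as `EuclideanSpace ℝ (Fin 3)`). -/
noncomputable def cross3 (a b : EuclideanSpace ℝ (Fin 3)) : EuclideanSpace ℝ (Fin 3) :=
  (WithLp.equiv 2 (Fin 3 → ℝ)).symm
    ![a 1 * b 2 - a 2 * b 1, a 2 * b 0 - a 0 * b 2, a 0 * b 1 - a 1 * b 0]


lemma cross3_apply (a b : E3) (i : Fin 3) :
    cross3 a b i = ![a 1 * b 2 - a 2 * b 1, a 2 * b 0 - a 0 * b 2, a 0 * b 1 - a 1 * b 0] i := rfl

noncomputable def crossBilin : E3 →ₗ[ℝ] E3 →ₗ[ℝ] E3 :=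
  LinearMap.mk₂ ℝ cross3
    (by intro a a' b; ext i; fin_cases i <;>
      simp [cross3_apply, PiLp.add_apply] <;> ring)
    (by intro c a b; ext i; fin_cases i <;>
      simp [cross3_apply, PiLp.smul_apply, smul_eq_mul] <;> ring)
    (by intro a b b'; ext i; fin_cases i <;>
      simp [cross3_apply, PiLp.add_apply] <;> ring)
    (by intro c a b; ext i; fin_cases i <;>
      simp [cross3_apply, PiLp.smul_apply, smul_eq_mul] <;> ring)

noncomputable def crossL : E3 →L[ℝ] E3 →L[ℝ] E3 :=
  LinearMap.toContinuousLinearMap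
    { toFun := fun a => LinearMap.toContinuousLinearMap (crossBilin a)
      map_add' := fun a a' => by ext b; simp
      map_smul' := fun c a => by ext b; simp }

@[simp] lemma crossL_apply (a b : E3) : crossL a b = cross3 a b := rfl


/-- The Biot–Savart kernel `K(x,y) = (x−y)/|x−y|³`. -/
noncomputable def biotSavartKernel (x y : EuclideanSpace ℝ (Fin 3)) :
    EuclideanSpace ℝ (Fin 3) := (‖x - y‖ ^ 3)⁻¹ • (x - y)

noncomputable def bsB (δ R : ℝ) (hδ : 0 < δ) (hR : δ < R) : ContDiffBump (0:E3) :=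
  ⟨R, R+1, hδ.trans hR, lt_add_one R⟩

noncomputable def bsβ (δ : ℝ) (hδ : 0 < δ) : ContDiffBump (0:E3) :=
  ⟨δ/2, δ, half_pos hδ, half_lt_self hδ⟩

noncomputable def bsg (δ R : ℝ) (hδ : 0 < δ) (hR : δ < R) : E3 → E3 :=
  fun w => ((bsB δ R hδ hR w) * (1 - bsβ δ hδ w)) • ((‖w‖ ^ 3)⁻¹ • (-w))

variable {δ R : ℝ} (hδ : 0 < δ) (hR : δ < R)

lemma bsg_eq (w : E3) (h1 : δ ≤ ‖w‖) (h2 : ‖w‖ ≤ R) :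
    bsg δ R hδ hR w = (‖w‖ ^ 3)⁻¹ • (-w) := by
  unfold bsg
  have hB : bsB δ R hδ hR w = 1 :=
    (bsB δ R hδ hR).one_of_mem_closedBall (by simpa [bsB, mem_closedBall] using h2)
  have hβ : bsβ δ hδ w = 0 :=
    (bsβ δ hδ).zero_of_le_dist (by simpa [bsβ] using h1)
  rw [hB, hβ]
  norm_num

lemma bsg_kernel (x y : E3) (h1 : δ ≤ dist x y) (h2 : dist x y ≤ R) :
    bsg δ R hδ hR (y - x) = biotSavartKernel x y := by
  rw [bsg_eq hδ hR (y - x) (by rwa [← dist_eq_norm, dist_comm y x])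
    (by rwa [← dist_eq_norm, dist_comm y x])]
  rw [biotSavartKernel, norm_sub_rev, neg_sub]

lemma bsg_zero (w : E3) (h : R + 1 ≤ ‖w‖) : bsg δ R hδ hR w = 0 := by
  unfold bsg
  have hB : bsB δ R hδ hR w = 0 := (bsB δ R hδ hR).zero_of_le_dist (by simpa [bsB] using h)
  rw [hB]
  simp

lemma bsg_hasCompactSupport : HasCompactSupport (bsg δ R hδ hR) :=
  HasCompactSupport.intro (isCompact_closedBall (0:E3) (R+1)) fun x hx =>
    bsg_zero hδ hR x (by
      rw [mem_closedBall, dist_zero_right, not_le] at hx; linarith)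

lemma bsg_contDiff (n : ℕ∞) : ContDiff ℝ n (bsg δ R hδ hR) := by
  rw [contDiff_iff_contDiffAt]
  intro w
  by_cases h : ‖w‖ < δ/2
  · have hev : bsg δ R hδ hR =ᶠ[nhds w] (fun _ => (0:E3)) := by
      filter_upwards [Metric.ball_mem_nhds w (by linarith : (0:ℝ) < δ/2 - ‖w‖)] with w' hw'
      rw [mem_ball, dist_eq_norm] at hw'
      have hn : ‖w'‖ < δ/2 := by
        have h2 := norm_sub_norm_le w' w
        linarith
      unfold bsg
      have hβ : bsβ δ hδ w' = 1 :=
        (bsβ δ hδ).one_of_mem_closedBall (by simpa [bsβ, mem_closedBall] using hn.le)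
      rw [hβ]
      simp
    exact (contDiffAt_const (c := (0:E3))).congr_of_eventuallyEq hev
  · push_neg at h
    have hw0 : w ≠ 0 := by
      intro h0; rw [h0, norm_zero] at h; linarith
    have hn0 : ‖w‖ ≠ 0 := norm_ne_zero_iff.2 hw0
    have hnorm : ContDiffAt ℝ n (fun v : E3 => ‖v‖) w := contDiffAt_id.norm ℝ hw0
    have hinv : ContDiffAt ℝ n (fun v : E3 => (‖v‖ ^ 3)⁻¹) w := by
      apply ContDiffAt.inv (hnorm.pow 3)
      positivity
    have hneg : ContDiffAt ℝ n (fun v : E3 => (-v : E3)) w := contDiff_neg.contDiffAt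
    have hmul : ContDiffAt ℝ n (fun v : E3 => (bsB δ R hδ hR v) * (1 - bsβ δ hδ v)) w :=
      (((bsB δ R hδ hR).contDiff (n := n)).contDiffAt.mul
        (contDiffAt_const.sub ((bsβ δ hδ).contDiff (n := n)).contDiffAt))
    exact hmul.smul (hinv.smul hneg)


section Abstract
variable (μ : Measure E3) [IsFiniteMeasure μ]

lemma kappa_bound : ∃ κ : ℝ, 0 ≤ κ ∧ ∀ j : Lp E3 2 μ, ∫ t, ‖j t‖ ∂μ ≤ κ * ‖j‖ := by
  refine ⟨(μ Set.univ ^ (1/(1:ℝ) - 1/(2:ℝ))).toReal, ENNReal.toReal_nonneg, fun j => ?_⟩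
  have hj : MemLp (↑j) 2 μ := Lp.memLp j
  have h1 : eLpNorm (↑j) 1 μ ≤ eLpNorm (↑j) 2 μ * μ Set.univ ^ (1/(1:ℝ) - 1/(2:ℝ)) :=
    eLpNorm_le_eLpNorm_mul_rpow_measure_univ (by norm_num : (1:ℝ≥0∞) ≤ 2)
      hj.aestronglyMeasurable
  have h2 : ∫ t, ‖j t‖ ∂μ = (eLpNorm (↑j) 1 μ).toReal := by
    rw [eLpNorm_one_eq_lintegral_enorm,
      integral_norm_eq_lintegral_enorm hj.aestronglyMeasurable]
  have hfin : eLpNorm (↑j) 2 μ * μ Set.univ ^ (1/(1:ℝ) - 1/(2:ℝ)) ≠ ⊤ := by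
    apply ENNReal.mul_ne_top (Lp.eLpNorm_ne_top j)
    exact ENNReal.rpow_ne_top_of_nonneg (by norm_num) (measure_ne_top μ _)
  calc ∫ t, ‖j t‖ ∂μ = (eLpNorm (↑j) 1 μ).toReal := h2
    _ ≤ (eLpNorm (↑j) 2 μ * μ Set.univ ^ (1/(1:ℝ) - 1/(2:ℝ))).toReal :=
        ENNReal.toReal_mono hfin h1
    _ = (μ Set.univ ^ (1/(1:ℝ) - 1/(2:ℝ))).toReal * ‖j‖ := by
        rw [ENNReal.toReal_mul, Lp.norm_def]; ring

variable {P : Set E3} (hP : IsCompact P)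

include hP in
lemma volP_finite : IsFiniteMeasure (volume.restrict P) :=
  ⟨by simpa [Measure.restrict_apply_univ] using hP.measure_lt_top⟩

include hP in
lemma norm_toLp_le_of_bound {f : E3 → E3} (hf : MemLp f 2 (volume.restrict P))
    {C : ℝ} (hC : 0 ≤ C) (h : ∀ y, ‖f y‖ ≤ C) :
    ‖hf.toLp f‖ ≤ ((volume P) ^ (2:ℝ≥0∞).toReal⁻¹).toReal * C := by
  rw [Lp.norm_toLp]
  have h1 : eLpNorm f 2 (volume.restrict P)
      ≤ (volume.restrict P) Set.univ ^ (2:ℝ≥0∞).toReal⁻¹ * ENNReal.ofReal C :=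
    eLpNorm_le_of_ae_bound (Filter.Eventually.of_forall h)
  rw [Measure.restrict_apply_univ] at h1
  have hfin : volume P ^ (2:ℝ≥0∞).toReal⁻¹ * ENNReal.ofReal C ≠ ⊤ :=
    ENNReal.mul_ne_top
      (ENNReal.rpow_ne_top_of_nonneg (by norm_num) hP.measure_lt_top.ne) ENNReal.ofReal_ne_top
  calc (eLpNorm f 2 (volume.restrict P)).toReal
      ≤ (volume P ^ (2:ℝ≥0∞).toReal⁻¹ * ENNReal.ofReal C).toReal := ENNReal.toReal_mono hfin h1
    _ = ((volume P) ^ (2:ℝ≥0∞).toReal⁻¹).toReal * C := by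
        rw [ENNReal.toReal_mul, ENNReal.toReal_ofReal hC]

end Abstract

lemma ae_mem_S {S : Set E3} (μ : Measure E3) (hμ : μ Sᶜ = 0) : ∀ᵐ x ∂μ, x ∈ S := by
  rw [ae_iff]
  exact hμ

lemma bs_eq_conv {S : Set E3} (μ : Measure E3) (hμ : μ Sᶜ = 0)
    {δ R : ℝ} (hδ : 0 < δ) (hR : δ < R) (j : E3 → E3) (y : E3)
    (hy : ∀ x ∈ S, δ ≤ dist x y ∧ dist x y ≤ R) :
    (∫ x, cross3 (biotSavartKernel x y) (j x) ∂μ)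
      = (j ⋆[crossL.flip, μ] bsg δ R hδ hR) y := by
  rw [convolution_def]
  refine integral_congr_ae ?_
  filter_upwards [ae_mem_S μ hμ] with x hx
  rw [ContinuousLinearMap.flip_apply, bsg_kernel hδ hR x y (hy x hx).1 (hy x hx).2, crossL_apply]

lemma bs_part1 {S P : Set E3} (hS : IsCompact S) (hP : IsCompact P)
    {δ : ℝ} (hδ : 0 < δ) (hdist : ∀ x ∈ S, ∀ y ∈ P, δ ≤ dist x y)
    (μ : Measure E3) [IsFiniteMeasure μ] (hμ : μ Sᶜ = 0)
    (j : E3 → E3) (hj : MemLp j 2 μ) (k : ℕ) :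
    ContDiffOn ℝ k (fun y => ∫ x, cross3 (biotSavartKernel x y) (j x) ∂μ) (interior P) := by
  obtain ⟨r, hr⟩ := (hS.union hP).isBounded.subset_closedBall 0
  set R : ℝ := max (δ + 1) (2 * r) with hRdef
  have hRδ : δ < R := lt_of_lt_of_le (by linarith) (le_max_left _ _)
  have hbound : ∀ x ∈ S, ∀ y ∈ P, dist x y ≤ R := by
    intro x hx y hy
    have h1 : dist x 0 ≤ r := hr (Or.inl hx)
    have h2 : dist y 0 ≤ r := hr (Or.inr hy)
    calc dist x y ≤ dist x 0 + dist 0 y := dist_triangle _ _ _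
      _ = dist x 0 + dist y 0 := by rw [dist_comm 0 y]
      _ ≤ 2 * r := by linarith
      _ ≤ R := le_max_right _ _
  have hjint : Integrable j μ := memLp_one_iff_integrable.mp
    (hj.mono_exponent (by norm_num))
  have hsmooth : ContDiff ℝ k (j ⋆[crossL.flip, μ] bsg δ R hδ hRδ) :=
    (bsg_hasCompactSupport hδ hRδ).contDiff_convolution_right _
      hjint.locallyIntegrable (bsg_contDiff hδ hRδ k)
  refine (hsmooth.contDiffOn).congr ?_
  intro y hy
  exact bs_eq_conv μ hμ hδ hRδ j y fun x hx =>
    ⟨hdist x hx y (interior_subset hy), hbound x hx y (interior_subset hy)⟩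


noncomputable def pickC (r : ℝ) (z : E3) : List E3 → E3 → E3
  | [], _ => z
  | c :: cs, y => if dist y c < r then c else pickC r z cs y

@[simp] lemma pickC_nil (r : ℝ) (z y : E3) : pickC r z [] y = z := rfl
@[simp] lemma pickC_cons (r : ℝ) (z c y : E3) (cs : List E3) :
    pickC r z (c :: cs) y = if dist y c < r then c else pickC r z cs y := rfl

lemma pickC_mem (r : ℝ) (z : E3) (l : List E3) (y : E3) :
    pickC r z l y = z ∨ pickC r z l y ∈ l := by
  induction l with
  | nil => exact Or.inl rfl
  | cons c cs ih =>
    by_cases h : dist y c < r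
    · exact Or.inr (by simp [h])
    · rcases ih with h' | h'
      · exact Or.inl (by simpa [h] using h')
      · exact Or.inr (by simp [h, h'])

lemma pickC_dist (r : ℝ) (z : E3) (l : List E3) (y : E3)
    (h : ∃ c ∈ l, dist y c < r) : dist y (pickC r z l y) < r := by
  induction l with
  | nil => simp at h
  | cons c cs ih =>
    by_cases hc : dist y c < r
    · simp [hc]
    · rcases h with ⟨c', hc', hd⟩
      rcases List.mem_cons.mp hc' with rfl | hmem
      · exact absurd hd hc
      · simpa [hc] using ih ⟨c', hmem, hd⟩

lemma pickC_measurable_comp (f : E3 → E3) (r : ℝ) (z : E3) (l : List E3) :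
    Measurable (fun y => f (pickC r z l y)) := by
  induction l with
  | nil => exact measurable_const (a := f z)
  | cons c cs ih =>
    have heq : (fun y => f (pickC r z (c :: cs) y))
        = fun y => if dist y c < r then f c else f (pickC r z cs y) := by
      funext y
      by_cases h : dist y c < r <;> simp [h]
    rw [heq]
    refine Measurable.ite ?_ measurable_const ih
    have : {a : E3 | dist a c < r} = Metric.ball c r := rfl
    rw [this]
    exact measurableSet_ball


section FcLemmas
variable (μ : Measure E3) [IsFiniteMeasure μ] (L : E3 →L[ℝ] E3 →L[ℝ] E3)
  (g : E3 → E3) (hgc : Continuous g) (hgs : HasCompactSupport g)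

lemma jLp_integrable (j : Lp E3 2 μ) : Integrable (↑j : E3 → E3) μ :=
  memLp_one_iff_integrable.mp ((Lp.memLp j).mono_exponent (by norm_num))

include hgc hgs in
lemma Fc_exists {f : E3 → E3} (hf : Integrable f μ) : ConvolutionExists f g L μ :=
  hgs.convolutionExists_right L hf.locallyIntegrable hgc

lemma Fc_congr {f f' : E3 → E3} (h : f =ᵐ[μ] f') (y : E3) :
    (f ⋆[L, μ] g) y = (f' ⋆[L, μ] g) y := by
  rw [convolution_def, convolution_def]
  exact integral_congr_ae (h.mono fun t ht => by dsimp only; rw [ht])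

include hgc hgs in
lemma Fc_add (j j' : Lp E3 2 μ) (y : E3) :
    ((↑(j + j') : E3 → E3) ⋆[L, μ] g) y
      = ((↑j : E3 → E3) ⋆[L, μ] g) y + ((↑j' : E3 → E3) ⋆[L, μ] g) y := by
  rw [Fc_congr μ L g (Lp.coeFn_add j j') y]
  have hptw : ∀ t : E3, L ((⇑j + ⇑j') t) (g (y - t))
      = L (j t) (g (y - t)) + L (j' t) (g (y - t)) := fun t => by
    simp [map_add]
  simp_rw [convolution_def, hptw]
  exact integral_add (Fc_exists μ L g hgc hgs (jLp_integrable μ j) y)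
    (Fc_exists μ L g hgc hgs (jLp_integrable μ j') y)

include hgc hgs in
lemma Fc_smul (c : ℝ) (j : Lp E3 2 μ) (y : E3) :
    ((↑(c • j) : E3 → E3) ⋆[L, μ] g) y = c • ((↑j : E3 → E3) ⋆[L, μ] g) y := by
  rw [Fc_congr μ L g (Lp.coeFn_smul c j) y]
  have hptw : ∀ t : E3, L ((c • ⇑j) t) (g (y - t)) = c • L (j t) (g (y - t)) := fun t => by
    simp [_root_.map_smul]
  simp_rw [convolution_def, hptw]
  exact integral_smul c _

include hgc hgs in
lemma Fc_norm_le {f : E3 → E3} (hf : Integrable f μ) {Cg : ℝ} (hCg : ∀ w, ‖g w‖ ≤ Cg)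
    (y : E3) : ‖(f ⋆[L, μ] g) y‖ ≤ ‖L‖ * Cg * ∫ t, ‖f t‖ ∂μ := by
  rw [convolution_def]
  calc ‖∫ t, L (f t) (g (y - t)) ∂μ‖ ≤ ∫ t, ‖L (f t) (g (y - t))‖ ∂μ :=
        norm_integral_le_integral_norm _
    _ ≤ ∫ t, (‖L‖ * Cg) * ‖f t‖ ∂μ := by
        refine integral_mono_of_nonneg (Eventually.of_forall fun t => norm_nonneg _)
          (hf.norm.const_mul _) (Eventually.of_forall fun t => ?_)
        have h3 : (0:ℝ) ≤ ‖L‖ * ‖f t‖ := by positivity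
        calc ‖L (f t) (g (y - t))‖ ≤ ‖L‖ * ‖f t‖ * ‖g (y - t)‖ := L.le_opNorm₂ _ _
          _ ≤ ‖L‖ * ‖f t‖ * Cg := mul_le_mul_of_nonneg_left (hCg (y - t)) h3
          _ = (‖L‖ * Cg) * ‖f t‖ := by ring
    _ = ‖L‖ * Cg * ∫ t, ‖f t‖ ∂μ := integral_const_mul _ _

include hgc hgs in
lemma Fc_diff_le {f : E3 → E3} (hf : Integrable f μ) {η : ℝ} (hη : 0 ≤ η) (y y' : E3)
    (h : ∀ t, ‖g (y - t) - g (y' - t)‖ ≤ η) :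
    ‖(f ⋆[L, μ] g) y - (f ⋆[L, μ] g) y'‖ ≤ ‖L‖ * η * ∫ t, ‖f t‖ ∂μ := by
  rw [convolution_def, convolution_def,
    ← integral_sub (Fc_exists μ L g hgc hgs hf y) (Fc_exists μ L g hgc hgs hf y')]
  have hptw : ∀ t : E3, L (f t) (g (y - t)) - L (f t) (g (y' - t))
      = L (f t) (g (y - t) - g (y' - t)) := fun t => by
    rw [map_sub]
  simp_rw [hptw]
  calc ‖∫ t, L (f t) (g (y - t) - g (y' - t)) ∂μ‖
      ≤ ∫ t, ‖L (f t) (g (y - t) - g (y' - t))‖ ∂μ := norm_integral_le_integral_norm _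
    _ ≤ ∫ t, (‖L‖ * η) * ‖f t‖ ∂μ := by
        refine integral_mono_of_nonneg (Eventually.of_forall fun t => norm_nonneg _)
          (hf.norm.const_mul _) (Eventually.of_forall fun t => ?_)
        have h3 : (0:ℝ) ≤ ‖L‖ * ‖f t‖ := by positivity
        calc ‖L (f t) (g (y - t) - g (y' - t))‖
            ≤ ‖L‖ * ‖f t‖ * ‖g (y - t) - g (y' - t)‖ := L.le_opNorm₂ _ _
          _ ≤ ‖L‖ * ‖f t‖ * η := mul_le_mul_of_nonneg_left (h t) h3
          _ = (‖L‖ * η) * ‖f t‖ := by ring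
    _ = ‖L‖ * η * ∫ t, ‖f t‖ ∂μ := integral_const_mul _ _

end FcLemmas
section Part2

variable {P : Set E3} (hP : IsCompact P)

include hP in
lemma memLp_of_bound_on {f : E3 → E3} (hf : AEStronglyMeasurable f (volume.restrict P))
    (C : ℝ) (h : ∀ y ∈ P, ‖f y‖ ≤ C) : MemLp f 2 (volume.restrict P) := by
  haveI := volP_finite hP
  exact MemLp.of_bound hf C ((ae_restrict_iff' hP.measurableSet).2 (ae_of_all _ h))

include hP in
lemma norm_toLp_le_of_bound' {f : E3 → E3} (hf : MemLp f 2 (volume.restrict P))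
    {C : ℝ} (hC : 0 ≤ C) (h : ∀ y ∈ P, ‖f y‖ ≤ C) :
    ‖hf.toLp f‖ ≤ ((volume P) ^ (2:ℝ≥0∞).toReal⁻¹).toReal * C := by
  rw [Lp.norm_toLp]
  have h1 : eLpNorm f 2 (volume.restrict P)
      ≤ (volume.restrict P) Set.univ ^ (2:ℝ≥0∞).toReal⁻¹ * ENNReal.ofReal C :=
    eLpNorm_le_of_ae_bound ((ae_restrict_iff' hP.measurableSet).2 (ae_of_all _ h))
  rw [Measure.restrict_apply_univ] at h1
  have hfin : volume P ^ (2:ℝ≥0∞).toReal⁻¹ * ENNReal.ofReal C ≠ ⊤ :=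
    ENNReal.mul_ne_top
      (ENNReal.rpow_ne_top_of_nonneg (by norm_num) hP.measure_lt_top.ne) ENNReal.ofReal_ne_top
  calc (eLpNorm f 2 (volume.restrict P)).toReal
      ≤ (volume P ^ (2:ℝ≥0∞).toReal⁻¹ * ENNReal.ofReal C).toReal := ENNReal.toReal_mono hfin h1
    _ = ((volume P) ^ (2:ℝ≥0∞).toReal⁻¹).toReal * C := by
        rw [ENNReal.toReal_mul, ENNReal.toReal_ofReal hC]

include hP in
lemma bs_part2' (μ : Measure E3) [IsFiniteMeasure μ]
    (L : E3 →L[ℝ] E3 →L[ℝ] E3) (g : E3 → E3) (hgc : Continuous g)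
    (hgs : HasCompactSupport g) :
    ∃ T : Lp E3 2 μ →L[ℝ] Lp E3 2 (volume.restrict P),
      IsCompactOperator T ∧ ∀ j : Lp E3 2 μ,
        (T j : E3 → E3) =ᵐ[volume.restrict P] ((↑j : E3 → E3) ⋆[L, μ] g) := by
  classical
  haveI := volP_finite hP
  obtain ⟨Cg, hCg⟩ := hgc.bounded_above_of_compact_support hgs
  have hCg0 : 0 ≤ Cg := le_trans (norm_nonneg _) (hCg 0)
  obtain ⟨κ, hκ0, hκ⟩ := kappa_bound μ
  set V : ℝ := ((volume P) ^ (2:ℝ≥0∞).toReal⁻¹).toReal with hVdef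
  have hV0 : 0 ≤ V := ENNReal.toReal_nonneg
  set C0 : ℝ := ‖L‖ * Cg * κ with hC0def
  have hC00 : 0 ≤ C0 := by positivity
  have hC0 : ∀ (j : Lp E3 2 μ) (y : E3), ‖((↑j : E3 → E3) ⋆[L, μ] g) y‖ ≤ C0 * ‖j‖ := by
    intro j y
    calc ‖((↑j : E3 → E3) ⋆[L, μ] g) y‖ ≤ ‖L‖ * Cg * ∫ t, ‖j t‖ ∂μ :=
          Fc_norm_le μ L g hgc hgs (jLp_integrable μ j) hCg y
      _ ≤ ‖L‖ * Cg * (κ * ‖j‖) := by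
          refine mul_le_mul_of_nonneg_left (hκ j) ?_
          positivity
      _ = C0 * ‖j‖ := by rw [hC0def]; ring
  have hmemF : ∀ j : Lp E3 2 μ, MemLp ((↑j : E3 → E3) ⋆[L, μ] g) 2 (volume.restrict P) :=
    fun j => memLp_of_bound_on hP
      ((hgs.continuous_convolution_right L (jLp_integrable μ j).locallyIntegrable
        hgc).aestronglyMeasurable) (C0 * ‖j‖) (fun y _ => hC0 j y)
  set Tlin : Lp E3 2 μ →ₗ[ℝ] Lp E3 2 (volume.restrict P) :=
    { toFun := fun j => (hmemF j).toLp _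
      map_add' := fun j j' => by
        rw [MemLp.toLp_congr (hmemF (j + j')) ((hmemF j).add (hmemF j'))
          (ae_of_all _ (Fc_add μ L g hgc hgs j j'))]
        exact MemLp.toLp_add _ _
      map_smul' := fun c j => by
        simp only [RingHom.id_apply]
        rw [MemLp.toLp_congr (hmemF (c • j)) ((hmemF j).const_smul c)
          (ae_of_all _ (Fc_smul μ L g hgc hgs c j))]
        exact MemLp.toLp_const_smul _ _ } with hTlindef
  set T : Lp E3 2 μ →L[ℝ] Lp E3 2 (volume.restrict P) :=
    Tlin.mkContinuous (V * C0) (fun j => by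
      calc ‖Tlin j‖ ≤ V * (C0 * ‖j‖) :=
            norm_toLp_le_of_bound' hP (hmemF j) (by positivity) (fun y _ => hC0 j y)
        _ = (V * C0) * ‖j‖ := by ring) with hTdef
  have hTapp : ∀ j, T j = (hmemF j).toLp _ := fun j => rfl
  -- the approximation step
  have key : ∀ ε : ℝ, 0 < ε → ∃ T' : Lp E3 2 μ →L[ℝ] Lp E3 2 (volume.restrict P),
      IsCompactOperator T' ∧ ‖T - T'‖ ≤ ε := by
    intro ε hε
    have hgu : UniformContinuous g :=
      hgc.uniformContinuous_of_tendsto_cocompact hgs.is_zero_at_infty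
    set η : ℝ := ε / (V * (‖L‖ * κ) + 1) with hηdef
    have hden : 0 < V * (‖L‖ * κ) + 1 := by positivity
    have hη0 : 0 < η := div_pos hε hden
    obtain ⟨d0, hd00, hd0⟩ := Metric.uniformContinuous_iff.mp hgu η hη0
    obtain ⟨t, ht⟩ := hP.elim_finite_subcover (fun c : E3 => ball c d0)
      (fun c => isOpen_ball) (fun y hy => mem_iUnion.2 ⟨y, mem_ball_self hd00⟩)
    set Θ : Finset E3 := insert 0 t with hΘdef
    set l : List E3 := t.toList with hldef
    set θ : E3 → E3 := pickC d0 0 l with hθdef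
    have hθΘ : ∀ y, θ y ∈ Θ := by
      intro y
      rcases pickC_mem d0 0 l y with h | h
      · rw [hθdef, h]; exact Finset.mem_insert_self _ _
      · exact Finset.mem_insert_of_mem (by rwa [← Finset.mem_toList])
    have hθP : ∀ y ∈ P, dist y (θ y) < d0 := by
      intro y hy
      refine pickC_dist d0 0 l y ?_
      have := ht hy
      simp only [mem_iUnion, exists_prop] at this
      obtain ⟨c, hct, hcy⟩ := this
      exact ⟨c, Finset.mem_toList.2 hct, (mem_ball.mp hcy)⟩
    set vex : ({c : E3 // c ∈ Θ} → E3) → E3 → E3 :=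
      fun v c => if hc : c ∈ Θ then v ⟨c, hc⟩ else 0 with hvexdef
    have hvexθ : ∀ (v) (y : E3), vex v (θ y) = v ⟨θ y, hθΘ y⟩ := by
      intro v y
      rw [hvexdef]
      simp only [hθΘ y, dif_pos]
    -- the evaluation operator
    set evlin : Lp E3 2 μ →ₗ[ℝ] ({c : E3 // c ∈ Θ} → E3) :=
      { toFun := fun j => fun c => ((↑j : E3 → E3) ⋆[L, μ] g) c.val
        map_add' := fun j j' => funext fun c => Fc_add μ L g hgc hgs j j' c.val
        map_smul' := fun a j => funext fun c => Fc_smul μ L g hgc hgs a j c.val } with hevlindef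
    set ev : Lp E3 2 μ →L[ℝ] ({c : E3 // c ∈ Θ} → E3) :=
      evlin.mkContinuous C0 (fun j => by
        refine (pi_norm_le_iff_of_nonneg (by positivity)).2 fun c => ?_
        exact hC0 j c.val) with hevdef
    have hSmem : ∀ v : {c : E3 // c ∈ Θ} → E3,
        MemLp (fun y => vex v (θ y)) 2 (volume.restrict P) := by
      intro v
      refine memLp_of_bound_on hP
        ((pickC_measurable_comp (vex v) d0 0 l).aestronglyMeasurable) ‖v‖ ?_
      intro y _
      rw [hvexθ]
      exact norm_le_pi_norm v _
    set Smlin : ({c : E3 // c ∈ Θ} → E3) →ₗ[ℝ] Lp E3 2 (volume.restrict P) :=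
      { toFun := fun v => (hSmem v).toLp _
        map_add' := fun v w => by
          rw [MemLp.toLp_congr (hSmem (v + w)) ((hSmem v).add (hSmem w))
            (ae_of_all _ (fun y => by
              change vex (v + w) (θ y) = vex v (θ y) + vex w (θ y)
              rw [hvexθ, hvexθ, hvexθ]; rfl))]
          exact MemLp.toLp_add _ _
        map_smul' := fun a v => by
          simp only [RingHom.id_apply]
          rw [MemLp.toLp_congr (hSmem (a • v)) ((hSmem v).const_smul a)
            (ae_of_all _ (fun y => by
              change vex (a • v) (θ y) = a • vex v (θ y)
              rw [hvexθ, hvexθ]; rfl))]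
          exact MemLp.toLp_const_smul _ _ } with hSmlindef
    set Sm : ({c : E3 // c ∈ Θ} → E3) →L[ℝ] Lp E3 2 (volume.restrict P) :=
      Smlin.mkContinuous V (fun v =>
        norm_toLp_le_of_bound' hP (hSmem v) (norm_nonneg v)
          (fun y _ => by rw [hvexθ]; exact norm_le_pi_norm v _)) with hSmdef
    refine ⟨Sm.comp ev, ?_, ?_⟩
    · -- compactness of the finite-rank operator
      have hbo : Bornology.IsBounded (⇑ev '' ball 0 1) := by
        refine (Metric.isBounded_iff_subset_closedBall 0).2 ⟨‖ev‖, ?_⟩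
        rintro z ⟨j, hj, rfl⟩
        rw [mem_closedBall, dist_zero_right]
        calc ‖ev j‖ ≤ ‖ev‖ * ‖j‖ := ev.le_opNorm j
          _ ≤ ‖ev‖ * 1 := by
              refine mul_le_mul_of_nonneg_left ?_ (norm_nonneg _)
              exact le_of_lt (mem_ball_zero_iff.mp hj)
          _ = ‖ev‖ := mul_one _
      have hevC : IsCompactOperator (⇑ev) :=
        ⟨closure (⇑ev '' ball 0 1), hbo.isCompact_closure,
          mem_of_superset (ball_mem_nhds 0 one_pos)
            (fun j hj => subset_closure (mem_image_of_mem _ hj))⟩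
      have := hevC.clm_comp Sm
      rwa [show ⇑Sm ∘ ⇑ev = ⇑(Sm.comp ev) from rfl] at this
    · -- the error bound
      refine ContinuousLinearMap.opNorm_le_bound _ hε.le fun j => ?_
      have heq : (T - Sm.comp ev) j
          = ((hmemF j).sub (hSmem (ev j))).toLp
              (((↑j : E3 → E3) ⋆[L, μ] g) - fun y => vex (ev j) (θ y)) := by
        rw [ContinuousLinearMap.sub_apply]
        exact (MemLp.toLp_sub (hmemF j) (hSmem (ev j))).symm
      have hptw : ∀ y ∈ P, ‖(((↑j : E3 → E3) ⋆[L, μ] g)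
          - fun y => vex (ev j) (θ y)) y‖ ≤ (‖L‖ * η * (κ * ‖j‖)) := by
        intro y hy
        have h1 : vex (ev j) (θ y) = ((↑j : E3 → E3) ⋆[L, μ] g) (θ y) := by
          rw [hvexθ]; rfl
        have h2 : ∀ s : E3, ‖g (y - s) - g (θ y - s)‖ ≤ η := by
          intro s
          have hd : dist (y - s) (θ y - s) < d0 := by
            rw [dist_sub_right]
            exact hθP y hy
          have := hd0 hd
          rw [dist_eq_norm] at this
          exact this.le
        calc ‖(((↑j : E3 → E3) ⋆[L, μ] g) - fun y => vex (ev j) (θ y)) y‖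
            = ‖((↑j : E3 → E3) ⋆[L, μ] g) y - ((↑j : E3 → E3) ⋆[L, μ] g) (θ y)‖ := by
              rw [Pi.sub_apply, h1]
          _ ≤ ‖L‖ * η * ∫ s, ‖j s‖ ∂μ :=
              Fc_diff_le μ L g hgc hgs (jLp_integrable μ j) hη0.le y (θ y) h2
          _ ≤ ‖L‖ * η * (κ * ‖j‖) := by
              refine mul_le_mul_of_nonneg_left (hκ j) ?_
              positivity
      rw [heq]
      calc ‖MemLp.toLp (((↑j : E3 → E3) ⋆[L, μ] g) - fun y => vex (ev j) (θ y))
              ((hmemF j).sub (hSmem (ev j)))‖ ≤ V * (‖L‖ * η * (κ * ‖j‖)) :=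
            norm_toLp_le_of_bound' hP _ (by positivity) hptw
        _ = (V * (‖L‖ * κ) * η) * ‖j‖ := by ring
        _ ≤ ε * ‖j‖ := by
            refine mul_le_mul_of_nonneg_right ?_ (norm_nonneg _)
            calc V * (‖L‖ * κ) * η ≤ (V * (‖L‖ * κ) + 1) * η := by
                  refine mul_le_mul_of_nonneg_right ?_ hη0.le
                  linarith
              _ = ε := by
                  rw [hηdef]
                  field_simp
  -- conclude by approximation
  have hseq : ∀ n : ℕ, ∃ T' : Lp E3 2 μ →L[ℝ] Lp E3 2 (volume.restrict P),
      IsCompactOperator T' ∧ ‖T - T'‖ ≤ 1 / (n + 1) := fun n => key _ (by positivity)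
  choose u hu1 hu2 using hseq
  have htend : Filter.Tendsto u Filter.atTop (nhds T) := by
    rw [tendsto_iff_norm_sub_tendsto_zero]
    refine squeeze_zero (fun n => norm_nonneg _) (fun n => ?_)
      tendsto_one_div_add_atTop_nhds_zero_nat
    rw [norm_sub_rev]
    exact hu2 n
  exact ⟨T, isCompactOperator_of_tendsto htend (Eventually.of_forall hu1),
    fun j => (hmemF j).coeFn_toLp⟩

end Part2

/-- Let `P ⊂ ℝ³` be compact and `S ⊂ ℝ³` compact with `dist(S,P) ≥ δ > 0`, `μ` a finite
measure carried by `μ`, and `j ∈ L²(S,ℝ³;μ)`. -/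
theorem biot_savart_smooth_and_compact
    (S P : Set (EuclideanSpace ℝ (Fin 3))) (hS : IsCompact S) (hP : IsCompact P)
    (δ : ℝ) (hδ : 0 < δ) (hdist : ∀ x ∈ S, ∀ y ∈ P, δ ≤ dist x y)
    (μ : Measure (EuclideanSpace ℝ (Fin 3))) [IsFiniteMeasure μ] (hμ : μ Sᶜ = 0) :
    (∀ j : EuclideanSpace ℝ (Fin 3) → EuclideanSpace ℝ (Fin 3), MemLp j 2 μ →
      ∀ k : ℕ, ContDiffOn ℝ k
        (fun y => ∫ x, cross3 (biotSavartKernel x y) (j x) ∂μ) (interior P))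
    ∧ ∃ T : Lp (EuclideanSpace ℝ (Fin 3)) 2 μ
          →L[ℝ] Lp (EuclideanSpace ℝ (Fin 3)) 2 (volume.restrict P),
        IsCompactOperator T ∧
        ∀ j : Lp (EuclideanSpace ℝ (Fin 3)) 2 μ,
          ∀ᵐ y ∂(volume.restrict P),
            T j y = ∫ x, cross3 (biotSavartKernel x y) (j x) ∂μ := by
  constructor
  · intro j hj k
    exact bs_part1 hS hP hδ hdist μ hμ j hj k
  · obtain ⟨r, hr⟩ := (hS.union hP).isBounded.subset_closedBall 0
    set R : ℝ := max (δ + 1) (2 * r) with hRdef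
    have hRδ : δ < R := lt_of_lt_of_le (by linarith) (le_max_left _ _)
    have hbound : ∀ x ∈ S, ∀ y ∈ P, dist x y ≤ R := by
      intro x hx y hy
      have h1 : dist x 0 ≤ r := hr (Or.inl hx)
      have h2 : dist y 0 ≤ r := hr (Or.inr hy)
      calc dist x y ≤ dist x 0 + dist 0 y := dist_triangle _ _ _
        _ = dist x 0 + dist y 0 := by rw [dist_comm 0 y]
        _ ≤ 2 * r := by linarith
        _ ≤ R := le_max_right _ _
    obtain ⟨T, hTc, hTae⟩ := bs_part2' hP μ crossL.flip (bsg δ R hδ hRδ)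
      ((bsg_contDiff hδ hRδ 0).continuous) (bsg_hasCompactSupport hδ hRδ)
    refine ⟨T, hTc, fun j => ?_⟩
    filter_upwards [hTae j, (ae_restrict_iff' hP.measurableSet).2 (ae_of_all _
      (fun y hy => bs_eq_conv μ hμ hδ hRδ (↑j) y
        (fun x hx => ⟨hdist x hx y hy, hbound x hx y hy⟩)))] with y h1 h2
    rw [h1]
    exact h2.symm
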